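/- arXiv:2106.15592 — 5 statements merged into one kernel-verified Lean document; each statement's English description precedes it below -/
import Mathlib

section
/- Given a short exact sequence 0 → A → B → C → 0 of modules which remains exact after applying Hom(X,−) for every X in the class X, if A and C belong to the X-precover completing domain of a module M, then so does B. -/
open CategoryTheory

universe u

variable {R : Type u} [Ring R]

/-- `g : X₀ ⟶ N` is an `𝒳`-precover of `N`. -/
def IsPrecover (𝒳 : ModuleCat.{u} R → Prop) {X₀ N : ModuleCat.{u} R} (g : X₀ ⟶ N) : Prop :=
  𝒳 X₀ ∧ ∀ X' : ModuleCat.{u} R, 𝒳 X' → ∀ f : X' ⟶ N, ∃ h : X' ⟶ X₀, h ≫ g = f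

/-- `𝒳` is a precovering class of left `R`-modules, closed under isomorphisms,
finite direct sums and direct summands. -/
structure PrecoveringClass (𝒳 : ModuleCat.{u} R → Prop) : Prop where
  precovering : ∀ N : ModuleCat.{u} R, ∃ (X₀ : ModuleCat.{u} R) (g : X₀ ⟶ N), IsPrecover 𝒳 g
  iso_closed : ∀ A B : ModuleCat.{u} R, Nonempty (A ≅ B) → 𝒳 A → 𝒳 B
  sum_closed : ∀ A B : ModuleCat.{u} R, 𝒳 A → 𝒳 B → 𝒳 (ModuleCat.of R (↥A × ↥B))
  summand_closed : ∀ A B : ModuleCat.{u} R, 𝒳 (ModuleCat.of R (↥A × ↥B)) → 𝒳 A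

/-- `N` belongs to the `𝒳`-precover completing domain `𝒳⁻¹(M)` of `M`:
every morphism `M ⟶ N` factors through a module in `𝒳`. -/
def MemDom (𝒳 : ModuleCat.{u} R → Prop) (M N : ModuleCat.{u} R) : Prop :=
  ∀ f : M ⟶ N, ∃ (X₀ : ModuleCat.{u} R) (h : M ⟶ X₀) (k : X₀ ⟶ N), 𝒳 X₀ ∧ h ≫ k = f

theorem stmt_2 (𝒳 : ModuleCat.{u} R → Prop) (h𝒳 : PrecoveringClass 𝒳)
    (M A B C : ModuleCat.{u} R) (i : A ⟶ B) (p : B ⟶ C)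
    (hi : Function.Injective i) (hp : Function.Surjective p) (hex : Function.Exact ⇑i ⇑p)
    (hhom : ∀ X' : ModuleCat.{u} R, 𝒳 X' → ∀ f : X' ⟶ C, ∃ g : X' ⟶ B, g ≫ p = f)
    (hA : MemDom 𝒳 M A) (hC : MemDom 𝒳 M C) : MemDom 𝒳 M B := by
  intro f
  -- factor f ≫ p through X₀
  obtain ⟨X₀, h₀, k₀, hX₀, hfac₀⟩ := hC (f ≫ p)
  -- lift k₀ along p
  obtain ⟨g, hg⟩ := hhom X₀ hX₀ k₀
  -- f - h₀ ≫ g composes to 0 with p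
  have hzero : ∀ m : M, p ((f - h₀ ≫ g) m) = 0 := by
    intro m
    have h1 : p (f m) = k₀ (h₀ m) := by
      have := congrArg (fun φ : M ⟶ C => φ m) hfac₀
      simpa using this.symm
    have h2 : p (g (h₀ m)) = k₀ (h₀ m) := by
      have := congrArg (fun φ : X₀ ⟶ C => φ (h₀ m)) hg
      simpa using this
    show p (f m - g (h₀ m)) = 0
    rw [map_sub, h1, ← h2]
    simp
  -- define f' : M ⟶ A with f' ≫ i = f - h₀ ≫ g
  have hmem' : ∀ m : M, ∃ a : A, i a = (f - h₀ ≫ g) m := by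
    intro m
    have := (hex ((f - h₀ ≫ g) m)).mp (hzero m)
    obtain ⟨a, ha⟩ := this
    exact ⟨a, ha⟩
  let e : A ≃ₗ[R] LinearMap.range i.hom := LinearEquiv.ofInjective i.hom hi
  let q : M →ₗ[R] LinearMap.range i.hom :=
    LinearMap.codRestrict _ (f - h₀ ≫ g).hom (fun m => by
      obtain ⟨a, ha⟩ := hmem' m; exact ⟨a, ha⟩)
  let f' : M ⟶ A := ModuleCat.ofHom (e.symm.toLinearMap.comp q)
  have hf' : ∀ m : M, i (f' m) = (f - h₀ ≫ g) m := by
    intro m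
    show i.hom (e.symm (q m)) = _
    have : i.hom (e.symm (q m)) = ((e (e.symm (q m))) : B) := rfl
    rw [this, e.apply_symm_apply]
    rfl
  -- factor f' through X₁
  obtain ⟨X₁, h₁, k₁, hX₁, hfac₁⟩ := hA f'
  -- assemble
  refine ⟨ModuleCat.of R (↥X₀ × ↥X₁), ModuleCat.ofHom (LinearMap.prod h₀.hom h₁.hom),
    ModuleCat.ofHom (LinearMap.coprod g.hom (k₁ ≫ i : X₁ ⟶ B).hom),
    h𝒳.sum_closed X₀ X₁ hX₀ hX₁, ?_⟩
  ext m
  have h3 : i (k₁ (h₁ m)) = i (f' m) := by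
    have := congrArg (fun φ : M ⟶ A => i (φ m)) hfac₁
    simpa using this
  have h4 : g (h₀ m) + i (k₁ (h₁ m)) = f m := by
    rw [h3, hf' m]
    show g (h₀ m) + (f m - g (h₀ m)) = f m
    abel
  exact h4
end

section
/- For a finite family of modules N₁,...,Nₘ, each Nᵢ belongs to the X-precover completing domain of M if and only if the direct sum N₁ ⊕ ... ⊕ Nₘ belongs to the X-precover completing domain of M. -/
open CategoryTheory

universe u

variable {R : Type u} [Ring R]

/-- transport `MemDom` along a linear equivalence -/
lemma memDom_of_lequiv (𝒳 : ModuleCat.{u} R → Prop) (M : ModuleCat.{u} R)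
    {A B : Type u} [AddCommGroup A] [Module R A] [AddCommGroup B] [Module R B]
    (e : A ≃ₗ[R] B) (hA : MemDom 𝒳 M (ModuleCat.of R A)) :
    MemDom 𝒳 M (ModuleCat.of R B) := by
  intro f
  obtain ⟨X₀, h, k, hX, hfac⟩ :=
    hA (f ≫ (ModuleCat.ofHom e.symm.toLinearMap : ModuleCat.of R B ⟶ ModuleCat.of R A))
  refine ⟨X₀, h, k ≫ (ModuleCat.ofHom e.toLinearMap : ModuleCat.of R A ⟶ ModuleCat.of R B), hX, ?_⟩
  apply ModuleCat.hom_ext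
  apply LinearMap.ext
  intro x
  have e₀ : k (h x) = e.symm (f x) := congrFun (congrArg (fun g => g.hom.toFun) hfac) x
  show e (k (h x)) = f x
  rw [e₀, e.apply_symm_apply]

lemma memDom_prod (𝒳 : ModuleCat.{u} R → Prop) (h𝒳 : PrecoveringClass 𝒳)
    (M A B : ModuleCat.{u} R) (hA : MemDom 𝒳 M A) (hB : MemDom 𝒳 M B) :
    MemDom 𝒳 M (ModuleCat.of R (↥A × ↥B)) := by
  intro f
  obtain ⟨X₁, h₁, k₁, hX₁, hfac₁⟩ :=
    hA (f ≫ (ModuleCat.ofHom (LinearMap.fst R ↥A ↥B) : ModuleCat.of R (↥A × ↥B) ⟶ A))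
  obtain ⟨X₂, h₂, k₂, hX₂, hfac₂⟩ :=
    hB (f ≫ (ModuleCat.ofHom (LinearMap.snd R ↥A ↥B) : ModuleCat.of R (↥A × ↥B) ⟶ B))
  refine ⟨ModuleCat.of R (↥X₁ × ↥X₂),
    (ModuleCat.ofHom (LinearMap.prod h₁.hom h₂.hom) :
      M ⟶ ModuleCat.of R (↥X₁ × ↥X₂)),
    (ModuleCat.ofHom (LinearMap.prodMap k₁.hom k₂.hom) :
      ModuleCat.of R (↥X₁ × ↥X₂) ⟶ ModuleCat.of R (↥A × ↥B)),
    h𝒳.sum_closed _ _ hX₁ hX₂, ?_⟩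
  apply ModuleCat.hom_ext
  apply LinearMap.ext
  intro x
  have e₁ : k₁ (h₁ x) = (f x).1 := congrFun (congrArg (fun g => g.hom.toFun) hfac₁) x
  have e₂ : k₂ (h₂ x) = (f x).2 := congrFun (congrArg (fun g => g.hom.toFun) hfac₂) x
  exact Prod.ext e₁ e₂

/-- linear version of `Equiv.piFinSucc` -/
def piFinSuccLequiv (n : ℕ) (β : Fin (n + 1) → Type u) [∀ i, AddCommGroup (β i)]
    [∀ i, Module R (β i)] : (∀ i, β i) ≃ₗ[R] β 0 × ∀ i : Fin n, β i.succ where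
  toFun f := (f 0, fun i => f i.succ)
  map_add' _ _ := rfl
  map_smul' _ _ := rfl
  invFun p := Fin.cons p.1 p.2
  left_inv f := funext fun i => Fin.cases rfl (fun _ => rfl) i
  right_inv p := rfl

lemma memDom_pi (𝒳 : ModuleCat.{u} R → Prop) (h𝒳 : PrecoveringClass 𝒳)
    (M : ModuleCat.{u} R) :
    ∀ (m : ℕ) (N : Fin m → ModuleCat.{u} R), (∀ i, MemDom 𝒳 M (N i)) →
      MemDom 𝒳 M (ModuleCat.of R (∀ i, ↥(N i))) := by
  intro m
  induction m with
  | zero =>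
    intro N _ f
    obtain ⟨X₀, g, hX, _⟩ := h𝒳.precovering (ModuleCat.of R (∀ i : Fin 0, ↥(N i)))
    refine ⟨X₀, 0, g, hX, ?_⟩
    apply ModuleCat.hom_ext
    apply LinearMap.ext
    intro x
    exact funext fun i => i.elim0
  | succ n ih =>
    intro N hN
    have h0 : MemDom 𝒳 M (ModuleCat.of R ↥(N 0)) := hN 0
    have htail := ih (fun i => N i.succ) (fun i => hN i.succ)
    have hprod := memDom_prod 𝒳 h𝒳 M (N 0) (ModuleCat.of R (∀ i : Fin n, ↥(N i.succ)))
      (hN 0) htail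
    exact memDom_of_lequiv 𝒳 M (piFinSuccLequiv n (fun i => ↥(N i))).symm hprod

theorem stmt_3 (𝒳 : ModuleCat.{u} R → Prop) (h𝒳 : PrecoveringClass 𝒳)
    (M : ModuleCat.{u} R) (m : ℕ) (N : Fin m → ModuleCat.{u} R) :
    (∀ i, MemDom 𝒳 M (N i)) ↔
      MemDom 𝒳 M (ModuleCat.of R (DirectSum (Fin m) fun i => ↥(N i))) := by
  constructor
  · intro h
    exact memDom_of_lequiv 𝒳 M
      (DirectSum.linearEquivFunOnFintype R (Fin m) (fun i => ↥(N i))).symm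
      (memDom_pi 𝒳 h𝒳 M m N h)
  · intro hd i f
    obtain ⟨X₀, h, k, hX, hfac⟩ := hd (f ≫
      (ModuleCat.ofHom (DirectSum.lof R (Fin m) (fun i => ↥(N i)) i : ↥(N i) →ₗ[R] _) :
        N i ⟶ ModuleCat.of R (DirectSum (Fin m) fun i => ↥(N i))))
    refine ⟨X₀, h, k ≫ (ModuleCat.ofHom (DirectSum.component R (Fin m) (fun i => ↥(N i)) i :
      _ →ₗ[R] ↥(N i)) : ModuleCat.of R (DirectSum (Fin m) fun i => ↥(N i)) ⟶ N i),
      hX, ?_⟩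
    apply ModuleCat.hom_ext
    apply LinearMap.ext
    intro x
    have e : k (h x) = DirectSum.lof R (Fin m) (fun i => ↥(N i)) i (f x) :=
      congrFun (congrArg (fun g => g.hom.toFun) hfac) x
    show DirectSum.component R (Fin m) (fun i => ↥(N i)) i (k (h x)) = f x
    rw [e, DirectSum.component.lof_self]
end

section
/- Let 0 → M → X₀ → M' → 0 be a short exact sequence with X₀ ∈ X. Then every module N with Ext¹(M',N) = 0 belongs to the X-precover completing domain of M. Moreover, if M → X₀ is an X-preenvelope, then every N in X⁻¹(M) with Ext¹(X₀,N) = 0 satisfies Ext¹(M',N) = 0. -/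
open CategoryTheory

universe u

variable {R : Type u} [Ring R]

/-- `Ext¹(A,B) = 0`, expressed by the splitting of every short exact sequence
`0 → B → E → A → 0`. -/
def Ext1Vanish (A B : ModuleCat.{u} R) : Prop :=
  ∀ (E : ModuleCat.{u} R) (i : B ⟶ E) (p : E ⟶ A),
    Function.Injective i → Function.Surjective p → Function.Exact ⇑i ⇑p →
      ∃ r : E ⟶ B, i ≫ r = 𝟙 B

theorem stmt_7 (𝒳 : ModuleCat.{u} R → Prop) (h𝒳 : PrecoveringClass 𝒳)
    (M X₀ M' : ModuleCat.{u} R) (h₀ : 𝒳 X₀) (α : M ⟶ X₀) (p : X₀ ⟶ M')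
    (hα : Function.Injective α) (hp : Function.Surjective p)
    (hex : Function.Exact ⇑α ⇑p) :
    (∀ N : ModuleCat.{u} R, Ext1Vanish M' N → MemDom 𝒳 M N) ∧
      ((∀ X' : ModuleCat.{u} R, 𝒳 X' → ∀ f : M ⟶ X', ∃ g : X₀ ⟶ X', α ≫ g = f) →
        ∀ N : ModuleCat.{u} R, MemDom 𝒳 M N → Ext1Vanish X₀ N → Ext1Vanish M' N) := by
  constructor
  · intro N hN f
    classical
    let αl : ↥M →ₗ[R] ↥X₀ := α.hom
    let fl : ↥M →ₗ[R] ↥N := f.hom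
    let pl : ↥X₀ →ₗ[R] ↥M' := p.hom
    let φ : ↥M →ₗ[R] ↥X₀ × ↥N := LinearMap.prod αl (-fl)
    let S : Submodule R (↥X₀ × ↥N) := LinearMap.range φ
    let E : ModuleCat.{u} R := ModuleCat.of R ((↥X₀ × ↥N) ⧸ S)
    let i : N ⟶ E := ModuleCat.ofHom (S.mkQ.comp (LinearMap.inr R ↥X₀ ↥N))
    have hle : S ≤ LinearMap.ker (pl.comp (LinearMap.fst R ↥X₀ ↥N)) := by
      rintro ⟨x, n⟩ ⟨m, hm⟩
      simp only [LinearMap.mem_ker, LinearMap.comp_apply, LinearMap.fst_apply]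
      have hx : x = αl m := by
        have := congrArg Prod.fst hm; simpa [φ] using this.symm
      rw [hx]
      exact hex.apply_apply_eq_zero m
    let π' : E ⟶ M' := ModuleCat.ofHom (S.liftQ (pl.comp (LinearMap.fst R ↥X₀ ↥N)) hle)
    have hi : Function.Injective i := by
      intro a b hab
      have h0 : i (a - b) = 0 := by rw [map_sub, hab, sub_self]
      have hmem : ((0 : ↥X₀), a - b) ∈ S := by
        rw [← Submodule.Quotient.mk_eq_zero]; exact h0
      obtain ⟨m, hm⟩ := hmem
      have hm1 : αl m = 0 := congrArg Prod.fst hm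
      have hm0 : m = 0 := by
        apply hα; rw [map_zero]; exact hm1
      have hm2 : -fl m = a - b := congrArg Prod.snd hm
      rw [hm0] at hm2
      simp only [map_zero, neg_zero] at hm2
      exact sub_eq_zero.mp hm2.symm
    have hπ' : Function.Surjective π' := by
      intro m'
      obtain ⟨x, hx⟩ := hp m'
      exact ⟨Submodule.Quotient.mk (x, 0), hx⟩
    have hexE : Function.Exact ⇑i ⇑π' := by
      rw [LinearMap.exact_iff]
      apply le_antisymm
      · intro z hz
        obtain ⟨⟨x, n⟩, rfl⟩ := Submodule.Quotient.mk_surjective S z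
        have hz' : pl x = 0 := hz
        obtain ⟨m, hm⟩ := (hex x).mp hz'
        refine ⟨n + fl m, (Submodule.Quotient.eq S).mpr ⟨-m, ?_⟩⟩
        have : φ (-m) = (-αl m, fl m) := by simp [φ]
        rw [this]
        apply Prod.ext
        · simpa using congrArg Neg.neg hm
        · simp
      · rintro _ ⟨n, rfl⟩
        show pl ((0 : ↥X₀), n).1 = 0
        simp
    obtain ⟨r, hr⟩ := hN E i π' hi hπ' hexE
    let j : X₀ ⟶ E := ModuleCat.ofHom (S.mkQ.comp (LinearMap.inl R ↥X₀ ↥N))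
    refine ⟨X₀, α, j ≫ r, h₀, ?_⟩
    ext m
    show r (j (αl m)) = fl m
    have hji : j (αl m) = i (fl m) := by
      apply (Submodule.Quotient.eq S).mpr
      exact ⟨m, by apply Prod.ext <;> simp [φ]⟩
    rw [hji]
    exact congrArg (fun g : N ⟶ N => g.hom (fl m)) hr
  · intro hpe N hmem hX₀ E i π hi hπ hexE
    classical
    let αl : ↥M →ₗ[R] ↥X₀ := α.hom
    let pl : ↥X₀ →ₗ[R] ↥M' := p.hom
    let il : ↥N →ₗ[R] ↥E := i.hom
    let πl : ↥E →ₗ[R] ↥M' := π.hom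
    let δ : ↥X₀ × ↥E →ₗ[R] ↥M' := pl.comp (LinearMap.fst R ↥X₀ ↥E) - πl.comp (LinearMap.snd R ↥X₀ ↥E)
    let K : Submodule R (↥X₀ × ↥E) := LinearMap.ker δ
    let F : ModuleCat.{u} R := ModuleCat.of R ↥K
    let j : N ⟶ F := ModuleCat.ofHom <| (LinearMap.prod (0 : ↥N →ₗ[R] ↥X₀) il).codRestrict K (by
      intro n
      simp only [K, LinearMap.mem_ker, δ, LinearMap.sub_apply, LinearMap.comp_apply,
        LinearMap.fst_apply, LinearMap.snd_apply, LinearMap.prod_apply, Function.prod]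
      rw [show πl (il n) = 0 from hexE.apply_apply_eq_zero n]
      simp)
    let q : F ⟶ X₀ := ModuleCat.ofHom ((LinearMap.fst R ↥X₀ ↥E).comp K.subtype)
    have hj : Function.Injective j := by
      intro a b hab
      apply hi
      exact congrArg (Prod.snd ∘ Subtype.val) hab
    have hq : Function.Surjective q := by
      intro x
      obtain ⟨e, he⟩ := hπ (pl x)
      exact ⟨⟨(x, e), by simp [K, δ]; exact sub_eq_zero.mpr he.symm⟩, rfl⟩
    have hexF : Function.Exact ⇑j ⇑q := by
      rw [LinearMap.exact_iff]
      apply le_antisymm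
      · rintro ⟨⟨x, e⟩, hxe⟩ hz
        have hx0 : x = 0 := hz
        have hπe : πl e = 0 := by
          have := hxe
          simp only [K, LinearMap.mem_ker, δ, LinearMap.sub_apply, LinearMap.comp_apply,
            LinearMap.fst_apply, LinearMap.snd_apply] at this
          rw [hx0] at this
          simpa using this.symm
        obtain ⟨n, hn⟩ := (hexE e).mp hπe
        exact ⟨n, Subtype.ext (Prod.ext (by exact hx0.symm) (by exact hn))⟩
      · rintro _ ⟨n, rfl⟩
        rfl
    obtain ⟨ρ, hρ⟩ := hX₀ F j q hj hq hexF
    let ρl : ↥K →ₗ[R] ↥N := ρ.hom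
    let w : ↥M →ₗ[R] ↥K := (LinearMap.prod αl (0 : ↥M →ₗ[R] ↥E)).codRestrict K (by
      intro m
      simp only [K, LinearMap.mem_ker, δ, LinearMap.sub_apply, LinearMap.comp_apply,
        LinearMap.fst_apply, LinearMap.snd_apply, LinearMap.prod_apply, Function.prod]
      rw [show pl (αl m) = 0 from hex.apply_apply_eq_zero m]
      simp)
    let g : M ⟶ N := ModuleCat.ofHom (ρl.comp w)
    obtain ⟨X', h', k', hX', hfac⟩ := hmem g
    obtain ⟨h'', hcomp⟩ := hpe X' hX' h'
    let k : X₀ ⟶ N := h'' ≫ k'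
    have hk : ∀ m : ↥M, k (αl m) = ρl (w m) := by
      intro m
      have h1 : (α ≫ k) = g := by
        show α ≫ h'' ≫ k' = g
        rw [← Category.assoc, hcomp, hfac]
      exact congrArg (fun g : M ⟶ N => g.hom m) h1
    let kl : ↥X₀ →ₗ[R] ↥N := k.hom
    let pr : ↥K →ₗ[R] ↥E := (LinearMap.snd R ↥X₀ ↥E).comp K.subtype
    have hprs : Function.Surjective pr := by
      intro e
      obtain ⟨x, hx⟩ := hp (πl e)
      exact ⟨⟨(x, e), by simp [K, δ]; exact sub_eq_zero.mpr hx⟩, rfl⟩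
    let ψ : ↥K →ₗ[R] ↥N := ρl - kl.comp ((LinearMap.fst R ↥X₀ ↥E).comp K.subtype)
    have hker : LinearMap.ker pr ≤ LinearMap.ker ψ := by
      rintro ⟨⟨x, e⟩, hxe⟩ hz
      have he0 : e = 0 := hz
      have hpx : pl x = 0 := by
        have := hxe
        simp only [K, LinearMap.mem_ker, δ, LinearMap.sub_apply, LinearMap.comp_apply,
          LinearMap.fst_apply, LinearMap.snd_apply] at this
        rw [he0] at this
        simpa using this
      obtain ⟨m, hm⟩ := (hex x).mp hpx
      have hwz : (⟨(x, e), hxe⟩ : ↥K) = w m := by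
        apply Subtype.ext
        exact Prod.ext (by exact hm.symm) (by simp [he0, w])
      simp only [LinearMap.mem_ker, hwz, ψ, LinearMap.sub_apply, LinearMap.comp_apply,
        LinearMap.fst_apply, LinearMap.snd_apply, Submodule.coe_subtype]
      have hqw : ((w m : ↥X₀ × ↥E)).1 = αl m := rfl
      rw [hqw, hk m, sub_self]
    let eq1 : (↥K ⧸ LinearMap.ker pr) ≃ₗ[R] ↥E := pr.quotKerEquivOfSurjective hprs
    let r : E ⟶ N := ModuleCat.ofHom ((LinearMap.ker pr |>.liftQ ψ hker).comp (eq1.symm : ↥E →ₗ[R] ↥K ⧸ LinearMap.ker pr))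
    have hre : ∀ u : ↥K, r (pr u) = ψ u := by
      intro u
      have h1 : eq1 (Submodule.Quotient.mk u) = pr u := rfl
      have h2 : eq1.symm (pr u) = Submodule.Quotient.mk u := by
        rw [← h1, LinearEquiv.symm_apply_apply]
      show (LinearMap.ker pr |>.liftQ ψ hker) (eq1.symm (pr u)) = ψ u
      rw [h2]
      rfl
    refine ⟨r, ?_⟩
    ext n
    show r (il n) = n
    have h3 : il n = pr (j n) := rfl
    rw [h3, hre]
    show ρl (j n) - kl ((j n).val.1) = n
    have h4 : ρl (j n) = n := congrArg (fun g : N ⟶ N => g.hom n) hρ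
    have h5 : (j n).val.1 = (0 : ↥X₀) := rfl
    rw [h4, h5, map_zero, sub_zero]
end

section
/- For a module M the following are equivalent: (1) M embeds in a module belonging to X; (2) there exists a module M' with M'^⊥ ⊆ X⁻¹(M); (3) every injective module belongs to X⁻¹(M); (4) the injective envelope E(M) belongs to X⁻¹(M). -/
open CategoryTheory

universe u

variable {R : Type u} [Ring R]

/-- `A` is essential in `N` (elementwise form). -/
def Ess {E : Type u} [AddCommGroup E] [Module R E] (A N : Submodule R E) : Prop :=
  ∀ x ∈ N, x ≠ 0 → ∃ r : R, r • x ≠ 0 ∧ r • x ∈ A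

lemma exists_max_ess {E : Type u} [AddCommGroup E] [Module R E] (A : Submodule R E) :
    ∃ N : Submodule R E, A ≤ N ∧ Ess A N ∧
      ∀ N' : Submodule R E, A ≤ N' → Ess A N' → N ≤ N' → N' = N := by
  set S : Set (Submodule R E) := {N | A ≤ N ∧ Ess A N} with hS
  have hA : A ∈ S := ⟨le_refl A, fun x hx hx0 => ⟨1, by simpa [one_smul] using hx0, by simpa using hx⟩⟩
  obtain ⟨m, hAm, hm⟩ := zorn_le_nonempty₀ S (fun c hcS hc y hy => by
    refine ⟨sSup c, ⟨le_trans (hcS hy).1 (le_sSup hy), ?_⟩, fun z hz => le_sSup hz⟩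
    intro x hx hx0
    rw [Submodule.mem_sSup_of_directed ⟨y, hy⟩ hc.directedOn] at hx
    obtain ⟨N, hN, hxN⟩ := hx
    exact (hcS hN).2 x hxN hx0) A hA
  exact ⟨m, hm.prop.1, hm.prop.2, fun N' h1 h2 h3 => le_antisymm (hm.2 ⟨h1, h2⟩ h3) h3⟩

lemma exists_max_disjoint {E : Type u} [AddCommGroup E] [Module R E] (N : Submodule R E) :
    ∃ K : Submodule R E, K ⊓ N = ⊥ ∧ ∀ K' : Submodule R E, K' ⊓ N = ⊥ → K ≤ K' → K' = K := by
  set S : Set (Submodule R E) := {K | K ⊓ N = ⊥} with hS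
  have hbot : (⊥ : Submodule R E) ∈ S := by simp [hS]
  obtain ⟨m, _, hm⟩ := zorn_le_nonempty₀ S (fun c hcS hc y hy => by
    refine ⟨sSup c, ?_, fun z hz => le_sSup hz⟩
    rw [Set.mem_setOf_eq, eq_bot_iff]
    rintro x ⟨hx1, hx2⟩
    rw [SetLike.mem_coe, Submodule.mem_sSup_of_directed ⟨y, hy⟩ hc.directedOn] at hx1
    obtain ⟨K, hK, hxK⟩ := hx1
    have : x ∈ K ⊓ N := ⟨hxK, hx2⟩
    rwa [hcS hK] at this) ⊥ hbot
  exact ⟨m, hm.prop, fun K' h1 h2 => le_antisymm (hm.2 h1 h2) h2⟩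

lemma exists_injective_essential (M : ModuleCat.{u} R) :
    ∃ (Nc : ModuleCat.{u} R) (i : M ⟶ Nc), Injective Nc ∧ Function.Injective i ∧
      ∀ K : Submodule R ↥Nc, K ≠ ⊥ → K ⊓ LinearMap.range i.hom ≠ ⊥ := by
  set E₀ : ModuleCat.{u} R := Injective.under M with hE₀
  set ι : M ⟶ E₀ := Injective.ι M with hι
  have hιinj : Function.Injective ι := (ModuleCat.mono_iff_injective ι).mp inferInstance
  set A : Submodule R ↥E₀ := LinearMap.range ι.hom with hA
  obtain ⟨N, hAN, hEss, hNmax⟩ := exists_max_ess A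
  obtain ⟨K, hKN, hKmax⟩ := exists_max_disjoint N
  set Q : ModuleCat.{u} R := ModuleCat.of R (↥E₀ ⧸ K) with hQ
  set q : ↥E₀ →ₗ[R] ↥E₀ ⧸ K := K.mkQ with hq
  set Nc : ModuleCat.{u} R := ModuleCat.of R ↥N with hNc
  set Nsub : Nc ⟶ E₀ := ModuleCat.ofHom (N.subtype : ↥N →ₗ[R] ↥E₀) with hNsub
  set j : Nc ⟶ Q := ModuleCat.ofHom (q.comp N.subtype : ↥N →ₗ[R] ↥E₀ ⧸ K) with hj
  have hjinj : Function.Injective j := by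
    rw [← LinearMap.ker_eq_bot, LinearMap.ker_eq_bot']
    rintro ⟨x, hxN⟩ hx
    have h0 : q x = 0 := hx
    rw [hq, Submodule.mkQ_apply, Submodule.Quotient.mk_eq_zero] at h0
    have : x ∈ K ⊓ N := ⟨h0, hxN⟩
    rw [hKN] at this
    exact Subtype.ext this
  -- the image of N is essential in Q
  have hqNess : ∀ z : ↥E₀ ⧸ K, z ≠ 0 → ∃ r : R, r • z ≠ 0 ∧ r • z ∈ N.map q := by
    intro z hz
    obtain ⟨x, rfl⟩ := K.mkQ_surjective z
    have hxK : x ∉ K := by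
      intro h
      exact hz (by rwa [Submodule.mkQ_apply, Submodule.Quotient.mk_eq_zero])
    have hKne : (K ⊔ Submodule.span R {x}) ⊓ N ≠ ⊥ := by
      intro hbot
      have := hKmax _ hbot le_sup_left
      exact hxK (this ▸ (le_sup_right (a := K) : Submodule.span R {x} ≤ K ⊔ Submodule.span R {x})
        (Submodule.mem_span_singleton_self x))
    obtain ⟨y, hy, hy0⟩ := Submodule.exists_mem_ne_zero_of_ne_bot hKne
    obtain ⟨hyKx, hyN⟩ := hy
    obtain ⟨k, hk, w, hw, hkw⟩ := Submodule.mem_sup.mp hyKx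
    obtain ⟨r, rfl⟩ := Submodule.mem_span_singleton.mp hw
    have hqy : q y = r • K.mkQ x := by
      rw [← hkw, map_add, map_smul]
      have : q k = 0 := by rwa [hq, Submodule.mkQ_apply, Submodule.Quotient.mk_eq_zero]
      rw [this, zero_add]
    refine ⟨r, ?_, ?_⟩
    · rw [← hqy]
      intro h
      have : y ∈ K ⊓ N := ⟨by rwa [hq, Submodule.mkQ_apply, Submodule.Quotient.mk_eq_zero] at h, hyN⟩
      rw [hKN] at this
      exact hy0 this
    · rw [← hqy]
      exact ⟨y, hyN, rfl⟩
  haveI : Mono j := (ModuleCat.mono_iff_injective j).mpr hjinj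
  set g : Q ⟶ E₀ := Injective.factorThru Nsub j with hg
  have hgj : j ≫ g = Nsub := Injective.comp_factorThru Nsub j
  have hg' : ∀ n : ↥N, g (q n) = n := fun n => by
    have := congrFun (congrArg (fun t : Nc ⟶ E₀ => ⇑t) hgj) n
    exact this
  have hginj : Function.Injective g := by
    rw [← LinearMap.ker_eq_bot, LinearMap.ker_eq_bot']
    intro z hgz
    by_contra hz
    obtain ⟨r, hrz, ⟨y, hyN, hy⟩⟩ := hqNess z hz
    have h1 : g (r • z) = 0 := by rw [map_smul, hgz, smul_zero]
    have h2 : g (r • z) = y := by rw [← hy]; exact hg' ⟨y, hyN⟩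
    rw [h1] at h2
    apply hrz
    rw [← hy, ← h2]
    simp
  -- range g = N by maximality
  have hrange : ∀ z : ↥Q, (g z : ↥E₀) ∈ N := by
    have hNle : N ≤ LinearMap.range g.hom := fun n hn => ⟨q n, hg' ⟨n, hn⟩⟩
    have heq : LinearMap.range g.hom = N := by
      apply hNmax
      · exact le_trans hAN hNle
      · rintro x ⟨z, rfl⟩ hx0
        have hz : z ≠ 0 := by rintro rfl; exact hx0 (map_zero _)
        obtain ⟨r, hrz, ⟨y, hyN, hy⟩⟩ := hqNess z hz
        have hrx : g (r • z) = y := by rw [← hy]; exact hg' ⟨y, hyN⟩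
        have hy0 : y ≠ 0 := by
          rintro rfl
          apply hrz
          rw [← hy]; simp
        have hrxN : r • g z ≠ 0 := by
          rw [← map_smul, hrx]; exact hy0
        obtain ⟨s, hs0, hsA⟩ := hEss y hyN hy0
        refine ⟨s * r, ?_, ?_⟩
        · rw [mul_smul, ← map_smul g.hom r z, hrx]; exact hs0
        · rw [mul_smul, ← map_smul g.hom r z, hrx]; exact hsA
      · exact hNle
    intro z
    rw [← heq]
    exact ⟨z, rfl⟩
  set ρ : E₀ ⟶ Nc := ModuleCat.ofHom (LinearMap.codRestrict N (g.hom.comp q) (fun x => hrange (q x))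
      : ↥E₀ →ₗ[R] ↥N) with hρ
  have hretr : Nsub ≫ ρ = 𝟙 Nc := by
    ext n
    exact hg' n
  haveI hNcInj : Injective Nc := by
    constructor
    intro X Y gg ff hMono
    exact ⟨Injective.factorThru (gg ≫ Nsub) ff ≫ ρ, by
      rw [← Category.assoc, Injective.comp_factorThru, Category.assoc, hretr, Category.comp_id]⟩
  set i : M ⟶ Nc := ModuleCat.ofHom (LinearMap.codRestrict N ι.hom (fun m => hAN ⟨m, rfl⟩)
      : ↥M →ₗ[R] ↥N) with hi
  have hiinj : Function.Injective i := by
    intro a b hab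
    exact hιinj (congrArg Subtype.val hab)
  refine ⟨Nc, i, hNcInj, hiinj, ?_⟩
  intro K' hK'
  obtain ⟨⟨x, hxN⟩, hxK', hx0⟩ := Submodule.exists_mem_ne_zero_of_ne_bot hK'
  have hx0' : x ≠ 0 := fun h => hx0 (Subtype.ext h)
  obtain ⟨r, hr0, hrA⟩ := hEss x hxN hx0'
  obtain ⟨m, hm⟩ := hrA
  rw [Submodule.ne_bot_iff]
  refine ⟨r • ⟨x, hxN⟩, ⟨K'.smul_mem r hxK', ⟨m, ?_⟩⟩, ?_⟩
  · exact Subtype.ext hm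
  · intro h
    exact hr0 (show r • x = 0 from congrArg Subtype.val h)

lemma ext1Vanish_of_injective (A N : ModuleCat.{u} R) (hN : Injective N) : Ext1Vanish A N := by
  intro E i p hi _ _
  haveI := hN
  haveI : Mono i := (ModuleCat.mono_iff_injective i).mpr hi
  exact ⟨Injective.factorThru (𝟙 N) i, Injective.comp_factorThru (𝟙 N) i⟩

lemma extend_of_ext1 {M X₀ N : ModuleCat.{u} R} (i : M ⟶ X₀) (hi : Function.Injective i)
    (hN : Ext1Vanish (ModuleCat.of R (↥X₀ ⧸ LinearMap.range i.hom)) N)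
    (f : M ⟶ N) : ∃ k : X₀ ⟶ N, i ≫ k = f := by
  set ir : M →ₗ[R] X₀ := i.hom with hir
  set D : Submodule R (↥X₀ × ↥N) := LinearMap.range (LinearMap.prod ir (-f.hom)) with hDdef
  set E : ModuleCat.{u} R := ModuleCat.of R ((↥X₀ × ↥N) ⧸ D)
  set j : N ⟶ E := ModuleCat.ofHom (D.mkQ.comp (LinearMap.inr R X₀ N) : N →ₗ[R] ((↥X₀ × ↥N) ⧸ D)) with hjdef
  have hD : D ≤ LinearMap.ker (((LinearMap.range ir).mkQ).comp (LinearMap.fst R X₀ N)) := by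
    rintro ⟨x, n⟩ ⟨m, hm⟩
    simp only [LinearMap.mem_ker, LinearMap.comp_apply, LinearMap.fst_apply]
    rw [Submodule.mkQ_apply, Submodule.Quotient.mk_eq_zero]
    exact ⟨m, congrArg Prod.fst hm⟩
  set p : E ⟶ ModuleCat.of R (↥X₀ ⧸ LinearMap.range ir) :=
    ModuleCat.ofHom (D.liftQ (((LinearMap.range ir).mkQ).comp (LinearMap.fst R X₀ N)) hD
      : ((↥X₀ × ↥N) ⧸ D) →ₗ[R] (↥X₀ ⧸ LinearMap.range ir)) with hpdef
  have hj : Function.Injective j := by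
    rw [← LinearMap.ker_eq_bot, LinearMap.ker_eq_bot']
    intro n hn
    have h0 : D.mkQ ((0 : X₀), n) = 0 := hn
    rw [Submodule.mkQ_apply, Submodule.Quotient.mk_eq_zero] at h0
    obtain ⟨m, hm⟩ := h0
    have h1 : ir m = 0 := congrArg Prod.fst hm
    have h2 : m = 0 := hi (by simpa [ir] using h1)
    have := congrArg Prod.snd hm
    simp [h2] at this
    exact this.symm
  have hp : Function.Surjective p := by
    intro y
    obtain ⟨x, rfl⟩ := (LinearMap.range ir).mkQ_surjective y
    exact ⟨D.mkQ (x, 0), rfl⟩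
  have hex : Function.Exact ⇑j ⇑p := by
    intro e
    obtain ⟨⟨x, n⟩, rfl⟩ := D.mkQ_surjective e
    constructor
    · intro he
      have hx : x ∈ LinearMap.range ir := by
        have h0 : (LinearMap.range ir).mkQ x = 0 := he
        rwa [Submodule.mkQ_apply, Submodule.Quotient.mk_eq_zero] at h0
      obtain ⟨m, hm⟩ := hx
      refine ⟨n + f m, ?_⟩
      show D.mkQ (0, n + f m) = D.mkQ (x, n)
      rw [Submodule.mkQ_apply, Submodule.mkQ_apply, Submodule.Quotient.eq]
      refine ⟨-m, Prod.ext ?_ ?_⟩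
      · show ir (-m) = 0 - x
        rw [map_neg, hm]; abel
      · show -(f.hom (-m)) = (n + f m) - n
        rw [map_neg, neg_neg]; abel
    · rintro ⟨n', hn'⟩
      have hmem : ((0:X₀), n') - (x, n) ∈ D := by
        rw [← Submodule.Quotient.eq]
        exact hn'
      obtain ⟨m, hm⟩ := hmem
      have hx : ir m = -x := by
        have := congrArg Prod.fst hm
        simpa using this
      show (LinearMap.range ir).mkQ x = 0
      rw [Submodule.mkQ_apply, Submodule.Quotient.mk_eq_zero]
      exact ⟨-m, by rw [map_neg, hx, neg_neg]⟩
  obtain ⟨r, hr⟩ := hN E j p hj hp hex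
  have hr' : ∀ nn : N, r (j nn) = nn := fun nn => by
    have := congrFun (congrArg (fun t : N ⟶ N => ⇑t) hr) nn
    simpa using this
  refine ⟨ModuleCat.ofHom (((r.hom).comp (D.mkQ.comp (LinearMap.inl R X₀ N))) : X₀ →ₗ[R] N), ?_⟩
  ext m
  have h1 : D.mkQ (ir m, (0:N)) = j (f m) := by
    show _ = D.mkQ ((0:X₀), f m)
    rw [Submodule.mkQ_apply, Submodule.mkQ_apply, Submodule.Quotient.eq]
    refine ⟨m, Prod.ext ?_ ?_⟩
    · show ir m = ir m - 0
      abel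
    · show -(f.hom m) = 0 - f m
      abel
  show r (D.mkQ (ir m, 0)) = f m
  rw [h1, hr']

theorem stmt_8 (𝒳 : ModuleCat.{u} R → Prop) (h𝒳 : PrecoveringClass 𝒳) (M : ModuleCat.{u} R) :
    [∃ (X₀ : ModuleCat.{u} R) (i : M ⟶ X₀), 𝒳 X₀ ∧ Function.Injective i,
      ∃ M' : ModuleCat.{u} R, ∀ N : ModuleCat.{u} R, Ext1Vanish M' N → MemDom 𝒳 M N,
      ∀ N : ModuleCat.{u} R, Injective N → MemDom 𝒳 M N,
      ∀ (E : ModuleCat.{u} R) (i : M ⟶ E), Injective E → Function.Injective i →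
        (∀ K : Submodule R ↥E, K ≠ ⊥ → K ⊓ LinearMap.range i.hom ≠ ⊥) →
          MemDom 𝒳 M E].TFAE := by
  tfae_have 1 → 2
  | ⟨X₀, i, hX, hi⟩ => by
    refine ⟨ModuleCat.of R (↥X₀ ⧸ LinearMap.range i.hom), fun N hN f => ?_⟩
    obtain ⟨k, hk⟩ := extend_of_ext1 i hi hN f
    exact ⟨X₀, i, k, hX, hk⟩
  tfae_have 2 → 3
  | ⟨M', hM'⟩ => fun N hN => hM' N (ext1Vanish_of_injective _ N hN)
  tfae_have 3 → 4
  | h3 => fun E i hE _ _ => h3 E hE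
  tfae_have 4 → 1
  | h4 => by
    obtain ⟨Nc, i, hNcInj, hiinj, hess⟩ := exists_injective_essential M
    obtain ⟨X₀, h, k, hX, hhk⟩ := h4 Nc i hNcInj hiinj hess i
    refine ⟨X₀, h, hX, fun a b hab => hiinj ?_⟩
    have ha : (h ≫ k) a = i a := congrFun (congrArg (fun t : M ⟶ Nc => ⇑t) hhk) a
    have hb : (h ≫ k) b = i b := congrFun (congrArg (fun t : M ⟶ Nc => ⇑t) hhk) b
    rw [← ha, ← hb]
    show k (h a) = k (h b)
    rw [hab]
  tfae_finish
end

section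
/- A ring R is left perfect if and only if the flat-precover completing domain of every left R-module equals its subprojectivity domain, if and only if the flat-precover completing domain of every module is contained in its subprojectivity domain. -/
open CategoryTheory

universe u

variable {R : Type u} [Ring R]

/-- The submodule of relations defining the balanced tensor product `W ⊗_R M` of a
right `R`-module `W` and a left `R`-module `M` as a quotient of `W ⊗_ℤ M`. -/
abbrev tensorRel (W : Type u) [AddCommGroup W] [Module Rᵐᵒᵖ W]
    (M : Type u) [AddCommGroup M] [Module R M] : Submodule ℤ (TensorProduct ℤ W M) :=
  Submodule.span ℤ
    {x | ∃ (w : W) (r : R) (m : M), x = (MulOpposite.op r • w) ⊗ₜ[ℤ] m - w ⊗ₜ[ℤ] (r • m)}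

/-- The balanced tensor product `W ⊗_R M` over the (possibly noncommutative) ring `R`. -/
abbrev RTensor (W : Type u) [AddCommGroup W] [Module Rᵐᵒᵖ W]
    (M : Type u) [AddCommGroup M] [Module R M] : Type u :=
  TensorProduct ℤ W M ⧸ tensorRel (R := R) W M

/-- The map `W ⊗_R M → K ⊗_R M` induced by a morphism `i : W → K` of right
`R`-modules. -/
noncomputable def tensorMap {W K : Type u} [AddCommGroup W] [Module Rᵐᵒᵖ W]
    [AddCommGroup K] [Module Rᵐᵒᵖ K] (i : W →ₗ[Rᵐᵒᵖ] K)
    (M : Type u) [AddCommGroup M] [Module R M] :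
    RTensor (R := R) W M →ₗ[ℤ] RTensor (R := R) K M :=
  Submodule.mapQ _ _ (LinearMap.rTensor M i.toAddMonoidHom.toIntLinearMap) (by
    refine Submodule.span_le.2 ?_
    rintro x ⟨w, r, m, rfl⟩
    refine Submodule.mem_comap.2 (Submodule.subset_span ?_)
    refine ⟨i w, r, m, ?_⟩
    exact (map_sub (LinearMap.rTensor M i.toAddMonoidHom.toIntLinearMap) _ _).trans (by simp))

/-- `M` is a flat left `R`-module: tensoring with `M` preserves injectivity of
morphisms of right `R`-modules. -/
def IsFlat (M : Type u) [AddCommGroup M] [Module R M] : Prop :=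
  ∀ (W K : Type u) [AddCommGroup W] [Module Rᵐᵒᵖ W] [AddCommGroup K] [Module Rᵐᵒᵖ K]
    (i : W →ₗ[Rᵐᵒᵖ] K), Function.Injective i → Function.Injective (tensorMap (R := R) i M)

section Aux

variable {W K : Type u} [AddCommGroup W] [Module Rᵐᵒᵖ W] [AddCommGroup K] [Module Rᵐᵒᵖ K]
variable {M M' : Type u} [AddCommGroup M] [Module R M] [AddCommGroup M'] [Module R M']

/-- functoriality of RTensor in the second variable -/
noncomputable def tensorMapRight (g : M →ₗ[R] M')
    (W : Type u) [AddCommGroup W] [Module Rᵐᵒᵖ W] :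
    RTensor (R := R) W M →ₗ[ℤ] RTensor (R := R) W M' :=
  Submodule.mapQ _ _ (LinearMap.lTensor W g.toAddMonoidHom.toIntLinearMap) (by
    refine Submodule.span_le.2 ?_
    rintro x ⟨w, r, m, rfl⟩
    refine Submodule.mem_comap.2 (Submodule.subset_span ?_)
    exact ⟨w, r, g m, (map_sub (LinearMap.lTensor W g.toAddMonoidHom.toIntLinearMap) _ _).trans (by simp)⟩)

lemma tensorMap_comm (i : W →ₗ[Rᵐᵒᵖ] K) (g : M →ₗ[R] M') :
    (tensorMap (R := R) i M').comp (tensorMapRight (R := R) g W) =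
      (tensorMapRight (R := R) g K).comp (tensorMap (R := R) i M) := by
  refine Submodule.linearMap_qext _ ?_
  apply TensorProduct.ext'
  intro w m
  rfl

lemma tensorMapRight_comp_eq_id (s : M →ₗ[R] M') (p : M' →ₗ[R] M)
    (h : ∀ m, p (s m) = m) (x : RTensor (R := R) W M) :
    tensorMapRight (R := R) p W (tensorMapRight (R := R) s W x) = x := by
  have : (tensorMapRight (R := R) p W).comp (tensorMapRight (R := R) s W) = LinearMap.id := by
    refine Submodule.linearMap_qext _ ?_
    apply TensorProduct.ext'
    intro w m
    show Submodule.Quotient.mk (w ⊗ₜ[ℤ] p (s m)) = _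
    rw [h m]; rfl
  exact DFunLike.congr_fun this x

lemma isFlat_of_retract {F : Type u} [AddCommGroup F] [Module R F]
    (s : M →ₗ[R] F) (p : F →ₗ[R] M) (h : ∀ m, p (s m) = m)
    (hF : IsFlat (R := R) F) : IsFlat (R := R) M := by
  intro W K _ _ _ _ i hi x y hxy
  have h1 : tensorMapRight (R := R) s K (tensorMap (R := R) i M x) =
      tensorMapRight (R := R) s K (tensorMap (R := R) i M y) := by rw [hxy]
  rw [← LinearMap.comp_apply, ← LinearMap.comp_apply, ← tensorMap_comm] at h1
  have h2 := hF W K i hi h1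
  calc x = tensorMapRight (R := R) p W (tensorMapRight (R := R) s W x) :=
        (tensorMapRight_comp_eq_id s p h x).symm
    _ = tensorMapRight (R := R) p W (tensorMapRight (R := R) s W y) := by rw [h2]
    _ = y := tensorMapRight_comp_eq_id s p h y

end Aux

section Free

variable {ι : Type u} {W K : Type u} [AddCommGroup W] [Module Rᵐᵒᵖ W]
  [AddCommGroup K] [Module Rᵐᵒᵖ K]

/-- the scalar action map `R → W`, `r ↦ op r • w`, as a `ℤ`-linear map -/
noncomputable def actMap (w : W) : R →ₗ[ℤ] W :=
  AddMonoidHom.toIntLinearMap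
    { toFun := fun r => MulOpposite.op r • w
      map_zero' := by simp
      map_add' := fun r r' => by rw [MulOpposite.op_add, add_smul] }

@[simp] lemma actMap_apply (w : W) (r : R) : actMap (R := R) w r = MulOpposite.op r • w := rfl

noncomputable def phiBil : W →ₗ[ℤ] (ι →₀ R) →ₗ[ℤ] (ι →₀ W) :=
  LinearMap.mk₂ ℤ (fun w f => f.sum fun j r => Finsupp.single j (actMap (R := R) w r))
    (fun w w' f => by
      simp only [actMap_apply, smul_add, Finsupp.single_add]
      rw [Finsupp.sum_add])
    (fun z w f => by
      simp only [actMap_apply, smul_comm _ z, ← Finsupp.smul_single]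
      rw [Finsupp.smul_sum])
    (fun w f f' => by
      rw [Finsupp.sum_add_index' (fun j => by simp)
        (fun j r r' => by simp [MulOpposite.op_add, add_smul, Finsupp.single_add])])
    (fun z w f => by
      rw [Finsupp.sum_smul_index' (fun j => by simp), Finsupp.smul_sum]
      refine Finsupp.sum_congr fun j _ => ?_
      simp only [actMap_apply, ← Finsupp.smul_single]
      rw [MulOpposite.op_smul, smul_assoc])

@[simp] lemma phiBil_apply (w : W) (f : ι →₀ R) :
    phiBil (R := R) w f = f.sum fun j r => Finsupp.single j (MulOpposite.op r • w) := rfl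

noncomputable def phi : RTensor (R := R) W (ι →₀ R) →ₗ[ℤ] (ι →₀ W) :=
  Submodule.liftQ _ (TensorProduct.lift (phiBil (R := R))) (by
    refine Submodule.span_le.2 ?_
    rintro x ⟨w, r, f, rfl⟩
    show TensorProduct.lift (phiBil (R := R)) (_ - _) = 0
    rw [map_sub, TensorProduct.lift.tmul, TensorProduct.lift.tmul]
    rw [sub_eq_zero, phiBil_apply, phiBil_apply,
      Finsupp.sum_smul_index' (fun j => by simp)]
    refine Finsupp.sum_congr fun j _ => ?_
    simp [smul_smul, ← MulOpposite.op_mul])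

@[simp] lemma phi_mk_tmul (w : W) (f : ι →₀ R) :
    phi (R := R) (Submodule.Quotient.mk (w ⊗ₜ[ℤ] f) : RTensor (R := R) W (ι →₀ R)) =
      f.sum fun j r => Finsupp.single j (MulOpposite.op r • w) := by
  show TensorProduct.lift (phiBil (R := R)) (w ⊗ₜ[ℤ] f) = _
  rw [TensorProduct.lift.tmul]; rfl

noncomputable def psi : (ι →₀ W) →ₗ[ℤ] RTensor (R := R) W (ι →₀ R) :=
  Finsupp.lsum ℤ fun j =>
    (Submodule.mkQ _).comp ((TensorProduct.mk ℤ W (ι →₀ R)).flip (Finsupp.single j 1))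

@[simp] lemma psi_single (j : ι) (w : W) :
    psi (R := R) (Finsupp.single j w) =
      (Submodule.Quotient.mk (w ⊗ₜ[ℤ] Finsupp.single j 1) : RTensor (R := R) W (ι →₀ R)) := by
  simp [psi]
  rfl

lemma rel_mk (w : W) (r : R) (f : ι →₀ R) :
    (Submodule.Quotient.mk ((MulOpposite.op r • w) ⊗ₜ[ℤ] f) : RTensor (R := R) W (ι →₀ R)) =
      Submodule.Quotient.mk (w ⊗ₜ[ℤ] (r • f)) := by
  rw [Submodule.Quotient.eq]
  exact Submodule.subset_span ⟨w, r, f, rfl⟩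

lemma psi_phi (x : RTensor (R := R) W (ι →₀ R)) : psi (R := R) (phi (R := R) x) = x := by
  obtain ⟨y, rfl⟩ := Submodule.Quotient.mk_surjective _ x
  induction y using TensorProduct.induction_on with
  | zero => simp
  | add a b ha hb =>
      rw [Submodule.Quotient.mk_add, map_add, map_add, ha, hb]
  | tmul w f =>
      induction f using Finsupp.induction_linear with
      | zero => simp [TensorProduct.tmul_zero]
      | add f g hf hg =>
          rw [TensorProduct.tmul_add, Submodule.Quotient.mk_add, map_add, map_add, hf, hg]
      | single j r =>
          rw [phi_mk_tmul, Finsupp.sum_single_index (by simp), psi_single, rel_mk]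
          congr 1
          rw [Finsupp.smul_single, smul_eq_mul, mul_one]

lemma phi_naturality (i : W →ₗ[Rᵐᵒᵖ] K) :
    (phi (R := R) (ι := ι)).comp (tensorMap (R := R) i (ι →₀ R)) =
      (Finsupp.mapRange.linearMap i.toAddMonoidHom.toIntLinearMap).comp (phi (R := R)) := by
  refine Submodule.linearMap_qext _ ?_
  apply TensorProduct.ext'
  intro w f
  simp only [LinearMap.comp_apply, Submodule.mkQ_apply, tensorMap, Submodule.mapQ_apply,
    LinearMap.rTensor_tmul, phi_mk_tmul]
  show phi (R := R) (Submodule.Quotient.mk (i w ⊗ₜ[ℤ] f)) = Finsupp.mapRange.linearMap i.toAddMonoidHom.toIntLinearMap (phi (R := R) (Submodule.Quotient.mk (w ⊗ₜ[ℤ] f)))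
  rw [phi_mk_tmul, phi_mk_tmul, map_finsuppSum]
  refine Finsupp.sum_congr fun j _ => ?_
  simp [Finsupp.mapRange_single, map_smul]

lemma isFlat_finsupp : IsFlat (R := R) (ι →₀ R) := by
  intro W K _ _ _ _ i hi x y hxy
  have h1 : phi (R := R) (tensorMap (R := R) i (ι →₀ R) x) =
      phi (R := R) (tensorMap (R := R) i (ι →₀ R) y) := by rw [hxy]
  rw [← LinearMap.comp_apply, ← LinearMap.comp_apply, phi_naturality] at h1
  have h2 : phi (R := R) x = phi (R := R) y := by
    have hinj : Function.Injective
        (Finsupp.mapRange.linearMap (α := ι) i.toAddMonoidHom.toIntLinearMap) := by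
      intro a b hab
      exact Finsupp.mapRange_injective _ (by simp) hi (by simpa [Finsupp.mapRange.linearMap] using hab)
    exact hinj h1
  calc x = psi (R := R) (phi (R := R) x) := (psi_phi x).symm
    _ = psi (R := R) (phi (R := R) y) := by rw [h2]
    _ = y := psi_phi y

end Free

lemma isFlat_of_projective {M : Type u} [AddCommGroup M] [Module R M]
    (hM : Module.Projective R M) : IsFlat (R := R) M := by
  obtain ⟨s, hs⟩ := Module.projective_def.mp hM
  exact isFlat_of_retract s (Finsupp.linearCombination R id) hs (isFlat_finsupp (ι := M))


/-- `N` belongs to the flat-precover completing domain `𝔉⁻¹(M)` of `M`: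
every morphism `M ⟶ N` factors through a flat module. -/
def FlatDom (M N : ModuleCat.{u} R) : Prop :=
  ∀ f : M ⟶ N, ∃ (F : ModuleCat.{u} R) (h : M ⟶ F) (k : F ⟶ N),
    IsFlat (R := R) ↥F ∧ h ≫ k = f

/-- `N` belongs to the subprojectivity domain `Pr⁻¹(M)` of `M`:
every morphism `M ⟶ N` factors through a projective module. -/
def ProjDom (M N : ModuleCat.{u} R) : Prop :=
  ∀ f : M ⟶ N, ∃ (P : ModuleCat.{u} R) (h : M ⟶ P) (k : P ⟶ N),
    Module.Projective R ↥P ∧ h ≫ k = f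

theorem stmt_12 :
    [∀ F : ModuleCat.{u} R, IsFlat (R := R) ↥F → Module.Projective R ↥F,
      ∀ M N : ModuleCat.{u} R, FlatDom M N ↔ ProjDom M N,
      ∀ M N : ModuleCat.{u} R, FlatDom M N → ProjDom M N].TFAE := by
  tfae_have 1 → 2 := by
    intro h1 M N
    constructor
    · rintro hf f
      obtain ⟨F, h, k, hF, hc⟩ := hf f
      exact ⟨F, h, k, h1 F hF, hc⟩
    · rintro hp f
      obtain ⟨P, h, k, hP, hc⟩ := hp f
      exact ⟨P, h, k, isFlat_of_projective hP, hc⟩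
  tfae_have 2 → 3 := fun h2 M N => (h2 M N).mp
  tfae_have 3 → 1 := by
    intro h3 F hF
    have hdom : FlatDom F F := fun f => ⟨F, 𝟙 F, f, hF, Category.id_comp f⟩
    obtain ⟨P, h, k, hP, hc⟩ := h3 F F hdom (𝟙 F)
    have := hP
    refine Module.Projective.of_split (R := R) (M := ↥P) h.hom k.hom ?_
    ext x
    have := DFunLike.congr_fun ((ModuleCat.hom_comp h k) ▸ congrArg ModuleCat.Hom.hom hc) x
    simpa using this
  tfae_finish
end
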